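/- Let X be a finite set with |X| = n ≥ 2, K a natural number with 1 ≤ K < n, α : X → ℝ with α(i) < 0 for every i, β a symmetric function assigning to each unordered pair {i,j} of distinct elements of X a value β(i,j) > 0, and B a real number. Define the QUBO objective of a subset S ⊆ X by O(S) = Σ_{i ∈ S} (α(i) − B·K + B/2) + Σ_{{i,j} ⊆ S, i ≠ j} (β(i,j) + B). If B > 2·K·max_{i ≠ j} β(i,j), then for every S ⊆ X with |S| = K − l for some 1 ≤ l ≤ K and every S' ⊆ X with S ⊆ S' and |S'| = K, it holds that O(S') < O(S). -/
import Mathlib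

lemma offDiag_insert' {ι : Type*} [LinearOrder ι] (T : Finset ι) (x : ι) (hx : x ∉ T) :
    (insert x T).offDiag = T.offDiag ∪ {x} ×ˢ T ∪ T ×ˢ {x} := by
  ext p
  simp only [Finset.mem_offDiag, Finset.mem_insert, Finset.mem_union, Finset.mem_product,
    Finset.mem_singleton]
  constructor
  · rintro ⟨h1 | h1, h2 | h2, h3⟩ <;> aesop
  · rintro ((⟨h1, h2, h3⟩ | ⟨h1, h2⟩) | ⟨h1, h2⟩) <;>
      refine ⟨by tauto, by tauto, fun he => ?_⟩
    · exact h3 he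
    · exact hx (by rw [← h1, he]; exact h2)
    · exact hx (by rw [← h2, ← he]; exact h1)

lemma pair_insert {ι : Type*} [LinearOrder ι] (g : ι → ι → ℝ) (hg : ∀ a b, g a b = g b a)
    (T : Finset ι) (x : ι) (hx : x ∉ T) :
    ∑ p ∈ (insert x T).offDiag.filter (fun p => p.1 < p.2), g p.1 p.2
      = ∑ p ∈ T.offDiag.filter (fun p => p.1 < p.2), g p.1 p.2 + ∑ i ∈ T, g i x := by
  rw [offDiag_insert' T x hx, Finset.filter_union, Finset.filter_union,
      Finset.sum_union, Finset.sum_union]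
  · have h1 : ∑ p ∈ ({x} ×ˢ T).filter (fun p => p.1 < p.2), g p.1 p.2
        = ∑ i ∈ T.filter (fun i => x < i), g i x := by
      have he : ({x} ×ˢ T).filter (fun p => p.1 < p.2)
          = {x} ×ˢ (T.filter (fun i => x < i)) := by
        ext p
        simp only [Finset.mem_filter, Finset.mem_product, Finset.mem_singleton]
        constructor
        · rintro ⟨⟨h1, h2⟩, h3⟩; exact ⟨h1, h2, by rw [← h1]; exact h3⟩
        · rintro ⟨h1, h2, h3⟩; exact ⟨⟨h1, h2⟩, by rw [h1]; exact h3⟩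
      rw [he, Finset.sum_product, Finset.sum_singleton]
      exact Finset.sum_congr rfl fun i _ => hg x i
    have h2 : ∑ p ∈ (T ×ˢ {x}).filter (fun p => p.1 < p.2), g p.1 p.2
        = ∑ i ∈ T.filter (fun i => i < x), g i x := by
      have he : (T ×ˢ {x}).filter (fun p => p.1 < p.2)
          = (T.filter (fun i => i < x)) ×ˢ {x} := by
        ext p
        simp only [Finset.mem_filter, Finset.mem_product, Finset.mem_singleton]
        constructor
        · rintro ⟨⟨h1, h2⟩, h3⟩; exact ⟨⟨h1, by rw [← h2]; exact h3⟩, h2⟩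
        · rintro ⟨⟨h1, h3⟩, h2⟩; exact ⟨⟨h1, h2⟩, by rw [h2]; exact h3⟩
      rw [he, Finset.sum_product_right, Finset.sum_singleton]
    rw [h1, h2]
    have h3 : T.filter (fun i => x < i) = T.filter (fun i => ¬ i < x) := by
      apply Finset.filter_congr
      intro i hi
      have hne : i ≠ x := fun h => hx (h ▸ hi)
      exact ⟨fun h => not_lt.mpr h.le, fun h => lt_of_le_of_ne (not_lt.mp h) (Ne.symm hne)⟩
    rw [h3, add_assoc, add_comm (∑ i ∈ T.filter (fun i => ¬ i < x), g i x),
        Finset.sum_filter_add_sum_filter_not]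
  all_goals {
    rw [Finset.disjoint_left]
    intro p hp hq
    simp only [Finset.mem_filter, Finset.mem_union, Finset.mem_product,
      Finset.mem_singleton, Finset.mem_offDiag] at hp hq
    aesop
  }

/-- The QUBO objective of a selection `S`: each selected node `i` contributes
`α i − B·K + B/2` and each unordered pair `{i,j} ⊆ S` of distinct selected nodes
contributes `β i j + B`. -/
noncomputable def quboObj {ι : Type*} [LinearOrder ι] (α : ι → ℝ) (β : ι → ι → ℝ)
    (B K : ℝ) (S : Finset ι) : ℝ :=
  (∑ i ∈ S, (α i - B * K + B / 2)) +
    ∑ p ∈ S.offDiag.filter (fun p => p.1 < p.2), (β p.1 p.2 + B)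

lemma qubo_step {ι : Type*} [LinearOrder ι] (X : Finset ι)
    (K : ℕ) (hK : 1 ≤ K)
    (α : ι → ℝ) (hα : ∀ i ∈ X, α i < 0)
    (β : ι → ι → ℝ) (hβsymm : ∀ i j, β i j = β j i)
    (hβpos : ∀ i ∈ X, ∀ j ∈ X, i ≠ j → 0 < β i j)
    (hXoff : X.offDiag.Nonempty)
    (B : ℝ) (hB : B > 2 * (K : ℝ) * X.offDiag.sup' hXoff (fun p => β p.1 p.2))
    (T : Finset ι) (hTX : T ⊆ X) (x : ι) (hxX : x ∈ X) (hx : x ∉ T)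
    (hcard : T.card + 1 ≤ K) :
    quboObj α β B (K : ℝ) (insert x T) < quboObj α β B (K : ℝ) T := by
  set M := X.offDiag.sup' hXoff (fun p => β p.1 p.2) with hM
  have hMpos : 0 < M := by
    obtain ⟨p, hp⟩ := hXoff
    have hle := Finset.le_sup' (fun p => β p.1 p.2) hp
    have := Finset.mem_offDiag.mp hp
    exact lt_of_lt_of_le (hβpos _ this.1 _ this.2.1 this.2.2) hle
  have hβg : ∀ a b, (fun a b => β a b + B) a b = (fun a b => β a b + B) b a := by
    intro a b; simp [hβsymm a b]
  have hins : ∑ p ∈ (insert x T).offDiag.filter (fun p => p.1 < p.2), (β p.1 p.2 + B)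
      = ∑ p ∈ T.offDiag.filter (fun p => p.1 < p.2), (β p.1 p.2 + B) + ∑ i ∈ T, (β i x + B) :=
    pair_insert (fun a b => β a b + B) hβg T x hx
  unfold quboObj
  rw [Finset.sum_insert hx, hins]
  have hbound : ∑ i ∈ T, (β i x + B) ≤ (T.card : ℝ) * (M + B) := by
    calc ∑ i ∈ T, (β i x + B) ≤ ∑ i ∈ T, (M + B) := by
          apply Finset.sum_le_sum
          intro i hi
          have hiX := hTX hi
          have hne : i ≠ x := fun h => hx (h ▸ hi)
          have hmem : (i, x) ∈ X.offDiag := Finset.mem_offDiag.mpr ⟨hiX, hxX, hne⟩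
          have := Finset.le_sup' (fun p => β p.1 p.2) hmem
          linarith
      _ = (T.card : ℝ) * (M + B) := by rw [Finset.sum_const, nsmul_eq_mul]
  have hαx : α x < 0 := hα x hxX
  have hc : (T.card : ℝ) + 1 ≤ (K : ℝ) := by exact_mod_cast hcard
  have hK' : (1 : ℝ) ≤ (K : ℝ) := by exact_mod_cast hK
  have hc0 : (0 : ℝ) ≤ (T.card : ℝ) := Nat.cast_nonneg _
  have hBpos : 0 < B := by nlinarith
  have hkey : (T.card : ℝ) * (M + B) ≤ ((K : ℝ) - 1) * (M + B) :=
    mul_le_mul_of_nonneg_right (by linarith) (by linarith)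
  nlinarith [hbound, hαx, hMpos, hB, hc, hK', hc0, hkey]

theorem qubo_too_few_nodes {ι : Type*} [LinearOrder ι] (X : Finset ι)
    (n : ℕ) (hXcard : X.card = n) (hn : 2 ≤ n)
    (K : ℕ) (hK : 1 ≤ K) (hKn : K < n)
    (α : ι → ℝ) (hα : ∀ i ∈ X, α i < 0)
    (β : ι → ι → ℝ) (hβsymm : ∀ i j, β i j = β j i)
    (hβpos : ∀ i ∈ X, ∀ j ∈ X, i ≠ j → 0 < β i j)
    (hXoff : X.offDiag.Nonempty)
    (B : ℝ) (hB : B > 2 * (K : ℝ) * X.offDiag.sup' hXoff (fun p => β p.1 p.2)) :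
    ∀ S ⊆ X, ∀ l : ℕ, 1 ≤ l → l ≤ K → S.card = K - l →
      ∀ S', S ⊆ S' → S' ⊆ X → S'.card = K →
        quboObj α β B (K : ℝ) S' < quboObj α β B (K : ℝ) S := by
  intro S hSX l hl1 hlK hScard S' hSS' hS'X hS'card
  -- general claim by induction on the deficit d
  have main : ∀ d : ℕ, ∀ T : Finset ι, T ⊆ S' → T.card + d = K → 1 ≤ d →
      quboObj α β B (K : ℝ) S' < quboObj α β B (K : ℝ) T := by
    intro d
    induction d with
    | zero => intro _ _ _ h; omega
    | succ d ih =>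
      intro T hTS' hTcard _
      have hTX : T ⊆ X := hTS'.trans hS'X
      have hlt : T.card < S'.card := by omega
      have hne : T ≠ S' := fun h => by rw [h] at hlt; omega
      obtain ⟨x, hxS', hxT⟩ := Finset.exists_of_ssubset (Finset.ssubset_iff_subset_ne.mpr ⟨hTS', hne⟩)
      have hstep := qubo_step X K hK α hα β hβsymm hβpos hXoff B hB T hTX x (hS'X hxS') hxT
        (by omega)
      have hsub : insert x T ⊆ S' := Finset.insert_subset hxS' hTS'
      rcases Nat.eq_zero_or_pos d with hd0 | hd1
      · -- insert x T = S'
        have hcards : (insert x T).card = S'.card := by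
          rw [Finset.card_insert_of_notMem hxT]; omega
        have : insert x T = S' := Finset.eq_of_subset_of_card_le hsub (le_of_eq hcards.symm)
        rw [← this]; exact hstep
      · have hih := ih (insert x T) hsub (by rw [Finset.card_insert_of_notMem hxT]; omega) hd1
        exact hih.trans hstep
  exact main l S hSS' (by omega) hl1
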